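/- Let M be a nonzero comultiplication R-module. The large sum graph Ǵ(M) has no vertices (i.e., M has no nonzero non-large submodules) if and only if M is cocyclic. -/

import Mathlib

/-- `M` is a comultiplication `R`-module: every submodule is of the form `(0 :_M I)`. -/
def IsComultiplication (R M : Type*) [CommRing R] [AddCommGroup M] [Module R M] : Prop :=
  ∀ N : Submodule R M, ∃ I : Ideal R, ∀ m : M, m ∈ N ↔ ∀ r ∈ I, r • m = 0

/-- A submodule is large (essential) if it meets every nonzero submodule nontrivially. -/
def IsLarge {R M : Type*} [CommRing R] [AddCommGroup M] [Module R M]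
    (N : Submodule R M) : Prop :=
  ∀ L : Submodule R M, L ≠ ⊥ → N ⊓ L ≠ ⊥

/-- The vertices of the large sum graph: nonzero non-large submodules. -/
abbrev LargeSumVtx (R M : Type*) [CommRing R] [AddCommGroup M] [Module R M] :=
  {N : Submodule R M // N ≠ ⊥ ∧ ¬ IsLarge N}

/-- The large sum graph: distinct nonzero non-large submodules `N, K` are adjacent
iff `N + K` is not large. -/
def largeSumGraph (R M : Type*) [CommRing R] [AddCommGroup M] [Module R M] :
    SimpleGraph (LargeSumVtx R M) where
  Adj N K := N ≠ K ∧ ¬ IsLarge (N.1 ⊔ K.1)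
  symm := ⟨fun a b ⟨h1, h2⟩ => ⟨h1.symm, by rwa [sup_comm]⟩⟩
  loopless := ⟨fun a h => h.1 rfl⟩

/-- The large sum graph of a nonzero comultiplication module has no vertices iff the module is
cocyclic, i.e. its socle is simple and large. -/
theorem stmt4 {R M : Type*} [CommRing R] [AddCommGroup M] [Module R M]
    [Nontrivial M] (hc : IsComultiplication R M) :
    IsEmpty (LargeSumVtx R M) ↔
      IsAtom (sSup {S : Submodule R M | IsAtom S}) ∧
        IsLarge (sSup {S : Submodule R M | IsAtom S}) := by
  constructor
  · -- every nonzero submodule is large ⇒ socle is an atom and large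
    intro he
    have h : ∀ N : Submodule R M, N ≠ ⊥ → IsLarge N := by
      intro N hN
      by_contra hL
      exact he.false ⟨N, hN, hL⟩
    obtain ⟨m, hm0⟩ := exists_ne (0 : M)
    set A : Ideal R := LinearMap.ker (LinearMap.toSpanSingleton R M m) with hA
    have hA_ne : A ≠ ⊤ := by
      intro h1
      have h2 : (1 : R) ∈ A := h1 ▸ Submodule.mem_top
      rw [hA, LinearMap.mem_ker, LinearMap.toSpanSingleton_apply, one_smul] at h2
      exact hm0 h2
    obtain ⟨𝔪, hmax, hAm⟩ := Ideal.exists_le_maximal A hA_ne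
    have hmP : m ∉ 𝔪 • Submodule.span R {m} := by
      intro hmem
      rw [Submodule.mem_smul_span_singleton] at hmem
      obtain ⟨r, hr, hrm⟩ := hmem
      have h1r : (1 : R) - r ∈ A := by
        rw [hA, LinearMap.mem_ker, LinearMap.toSpanSingleton_apply, sub_smul, one_smul, hrm,
          sub_self]
      have hone : (1 : R) ∈ 𝔪 := by
        have := 𝔪.add_mem (hAm h1r) hr
        simpa using this
      exact hmax.ne_top ((Ideal.eq_top_iff_one 𝔪).2 hone)
    obtain ⟨I, hI⟩ := hc (𝔪 • Submodule.span R {m})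
    have hnot : ¬ ∀ r ∈ I, r • m = 0 := fun hcon => hmP ((hI m).2 hcon)
    push_neg at hnot
    obtain ⟨a, haI, ham⟩ := hnot
    set x := a • m with hx
    have hx0 : x ≠ 0 := ham
    have hmx : ∀ r ∈ 𝔪, r • x = 0 := by
      intro r hr
      have hrm : r • m ∈ 𝔪 • Submodule.span R {m} :=
        Submodule.smul_mem_smul hr (Submodule.mem_span_singleton_self m)
      have h2 := (hI (r • m)).1 hrm a haI
      show r • a • m = 0
      rw [smul_comm]
      exact h2
    set S := Submodule.span R {x} with hS
    have hS0 : S ≠ ⊥ := by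
      simpa [hS, Submodule.span_singleton_eq_bot] using hx0
    have hSle : ∀ b : Submodule R M, b ≠ ⊥ → b ≤ S → b = S := by
      intro b hb hbS
      obtain ⟨y, hyb, hy0⟩ := Submodule.exists_mem_ne_zero_of_ne_bot hb
      obtain ⟨r, hry⟩ := Submodule.mem_span_singleton.1 (hbS hyb)
      have hr𝔪 : r ∉ 𝔪 := fun hr => hy0 (by rw [← hry]; exact hmx r hr)
      obtain ⟨u, i, hi, hui⟩ := hmax.exists_inv hr𝔪
      have hxb : x ∈ b := by
        have hone : (u * r + i) • x = x := by rw [hui, one_smul]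
        rw [← hone, add_smul, hmx i hi, add_zero, mul_smul]
        exact b.smul_mem u (by rw [hry]; exact hyb)
      exact le_antisymm hbS ((Submodule.span_singleton_le_iff_mem x b).2 hxb)
    have hAtom : IsAtom S := by
      refine ⟨hS0, fun b hbS => ?_⟩
      by_contra hb
      exact hbS.ne (hSle b hb hbS.le)
    have hset : {S' : Submodule R M | IsAtom S'} = {S} := by
      ext T
      simp only [Set.mem_setOf_eq, Set.mem_singleton_iff]
      constructor
      · intro hT
        have hST : S ⊓ T ≠ ⊥ := h S hS0 T hT.1
        have hinf : S ⊓ T = T := by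
          rcases hT.le_iff.1 inf_le_right with h1 | h1
          · exact absurd h1 hST
          · exact h1
        exact hSle T hT.1 (hinf ▸ inf_le_left)
      · rintro rfl; exact hAtom
    rw [hset, sSup_singleton]
    exact ⟨hAtom, h S hS0⟩
  · rintro ⟨hat, hlar⟩
    refine ⟨?_⟩
    rintro ⟨N, hN, hNl⟩
    apply hNl
    intro L hL
    have hlesub : ∀ K : Submodule R M, K ≠ ⊥ →
        sSup {S : Submodule R M | IsAtom S} ≤ K := by
      intro K hK
      rcases hat.le_iff.1 (inf_le_left (a := sSup {S : Submodule R M | IsAtom S}) (b := K))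
        with h2 | h2
      · exact absurd h2 (hlar K hK)
      · exact h2.ge.trans inf_le_right
    intro hNL
    exact hat.1 (le_bot_iff.1 (hNL ▸ le_inf (hlesub N hN) (hlesub L hL)))
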